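/- Let d ≥ 2 and let φ : M_d(ℂ) → M_d(ℂ) be a ℂ-linear, trace-preserving map in Holevo form. Suppose φ has a semipositive fixed point: there exists A ∈ M_d(ℂ) with A positive semidefinite, A ≠ 0, det A = 0, and φ(A) = A. Then the kernel of φ has complex dimension at least 2(d−1); in particular the determinant of φ (as a ℂ-linear endomorphism of M_d(ℂ)) is zero. -/

import Mathlib

open Matrix Kronecker
open scoped ComplexOrder

/-- A bipartite matrix on `ℂ^{d₁} ⊗ ℂ^{d₂}` is separable if it is a finite sum of
Kronecker products of positive semidefinite matrices. -/
def MatSep {d₁ d₂ : ℕ} (ρ : Matrix (Fin d₁ × Fin d₂) (Fin d₁ × Fin d₂) ℂ) : Prop :=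
  ∃ (k : ℕ) (A : Fin k → Matrix (Fin d₁) (Fin d₁) ℂ) (B : Fin k → Matrix (Fin d₂) (Fin d₂) ℂ),
    (∀ i, (A i).PosSemidef) ∧ (∀ i, (B i).PosSemidef) ∧ ρ = ∑ i, A i ⊗ₖ B i

/-- Holevo form: `φ(X) = Σ_k Tr(E_k X) ρ_k` with all `ρ_k`, `E_k` positive semidefinite.
(Equivalently, φ is entanglement-breaking.) -/
def HolevoForm {d : ℕ} (φ : Matrix (Fin d) (Fin d) ℂ →ₗ[ℂ] Matrix (Fin d) (Fin d) ℂ) : Prop :=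
  ∃ (k : ℕ) (ρ E : Fin k → Matrix (Fin d) (Fin d) ℂ),
    (∀ i, (ρ i).PosSemidef) ∧ (∀ i, (E i).PosSemidef) ∧
      ∀ X, φ X = ∑ i, (E i * X).trace • ρ i

namespace Stmt4Aux

variable {d : ℕ}

lemma trace_ctm_nonneg (M : Matrix (Fin d) (Fin d) ℂ) : 0 ≤ (Mᴴ * M).trace := by
  rw [Matrix.trace]
  refine Finset.sum_nonneg fun j _ => ?_
  rw [Matrix.diag_apply, Matrix.mul_apply]
  refine Finset.sum_nonneg fun i _ => ?_
  simpa [Matrix.conjTranspose_apply] using star_mul_self_nonneg (M i j)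

lemma trace_ctm_eq_zero {M : Matrix (Fin d) (Fin d) ℂ} (h : (Mᴴ * M).trace = 0) : M = 0 := by
  ext i j
  have h1 : ∀ j ∈ Finset.univ, (0:ℂ) ≤ (Mᴴ * M).diag j :=  fun j _ => by
    rw [Matrix.diag_apply, Matrix.mul_apply]
    refine Finset.sum_nonneg fun i _ => ?_
    simpa [Matrix.conjTranspose_apply] using star_mul_self_nonneg (M i j)
  rw [Matrix.trace] at h
  have h2 := (Finset.sum_eq_zero_iff_of_nonneg h1).mp h j (Finset.mem_univ j)
  rw [Matrix.diag_apply, Matrix.mul_apply] at h2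
  have h3 : ∀ i ∈ Finset.univ, (0:ℂ) ≤ Mᴴ j i * M i j := fun i _ => by
    simpa [Matrix.conjTranspose_apply] using star_mul_self_nonneg (M i j)
  have h4 := (Finset.sum_eq_zero_iff_of_nonneg h3).mp h2 i (Finset.mem_univ i)
  rw [Matrix.conjTranspose_apply] at h4
  have h5 : star (M i j) * M i j = 0 := h4
  simpa using (CStarRing.star_mul_self_eq_zero_iff (M i j)).mp h5

lemma exists_ctm (E A : Matrix (Fin d) (Fin d) ℂ) (hE : E.PosSemidef) (hA : A.PosSemidef) :
    ∃ M : Matrix (Fin d) (Fin d) ℂ, (E * A).trace = (Mᴴ * M).trace ∧ (M = 0 → E * A = 0) := by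
  obtain ⟨B, hB⟩ : ∃ B : Matrix (Fin d) (Fin d) ℂ, E = Bᴴ * B := by
    classical
    open scoped MatrixOrder in exact CStarAlgebra.nonneg_iff_eq_star_mul_self.mp hE.nonneg
  obtain ⟨C, hC⟩ : ∃ C : Matrix (Fin d) (Fin d) ℂ, A = Cᴴ * C := by
    classical
    open scoped MatrixOrder in exact CStarAlgebra.nonneg_iff_eq_star_mul_self.mp hA.nonneg
  refine ⟨B * Cᴴ, ?_, fun h => ?_⟩
  · rw [hB, hC]
    calc (Bᴴ * B * (Cᴴ * C)).trace = (Bᴴ * (B * (Cᴴ * C))).trace := by rw [mul_assoc]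
      _ = ((B * (Cᴴ * C)) * Bᴴ).trace := Matrix.trace_mul_comm _ _
      _ = ((B * Cᴴ) * (C * Bᴴ)).trace := by simp only [mul_assoc]
      _ = ((C * Bᴴ) * (B * Cᴴ)).trace := Matrix.trace_mul_comm _ _
      _ = ((B * Cᴴ)ᴴ * (B * Cᴴ)).trace := by
          rw [Matrix.conjTranspose_mul, Matrix.conjTranspose_conjTranspose]
  · rw [hB, hC, show Bᴴ * B * (Cᴴ * C) = Bᴴ * (B * Cᴴ) * C by noncomm_ring, h]
    simp

lemma trace_psd_mul_nonneg {E A : Matrix (Fin d) (Fin d) ℂ} (hE : E.PosSemidef)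
    (hA : A.PosSemidef) : 0 ≤ (E * A).trace := by
  obtain ⟨M, hM, -⟩ := exists_ctm E A hE hA
  rw [hM]; exact trace_ctm_nonneg M

lemma psd_mul_eq_zero {E A : Matrix (Fin d) (Fin d) ℂ} (hE : E.PosSemidef)
    (hA : A.PosSemidef) (h : (E * A).trace = 0) : E * A = 0 := by
  obtain ⟨M, hM, hM0⟩ := exists_ctm E A hE hA
  exact hM0 (trace_ctm_eq_zero (by rw [← hM, h]))

noncomputable section

/-- the "orthogonal complement of the kernel of `A`" w.r.t. the sesquilinear dot product. -/
def ortho (A : Matrix (Fin d) (Fin d) ℂ) : Submodule ℂ (Fin d → ℂ) where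
  carrier := {x | ∀ v, A *ᵥ v = 0 → star v ⬝ᵥ x = 0}
  add_mem' := fun hx hy v hv => by
    rw [dotProduct_add, hx v hv, hy v hv, add_zero]
  zero_mem' := fun v hv => dotProduct_zero _
  smul_mem' := fun c x hx v hv => by
    rw [dotProduct_smul, hx v hv, smul_zero]

lemma mem_ortho {A : Matrix (Fin d) (Fin d) ℂ} {x : Fin d → ℂ} :
    x ∈ ortho A ↔ ∀ v, A *ᵥ v = 0 → star v ⬝ᵥ x = 0 := Iff.rfl

/-- image of a submodule under entrywise star. -/
def starSub (U : Submodule ℂ (Fin d → ℂ)) : Submodule ℂ (Fin d → ℂ) where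
  carrier := {x | star x ∈ U}
  add_mem' := fun {x y} hx hy => by
    show star (x + y) ∈ U
    rw [star_add]; exact U.add_mem hx hy
  zero_mem' := by show star (0 : Fin d → ℂ) ∈ U; rw [star_zero]; exact U.zero_mem
  smul_mem' := fun c x hx => by
    show star (c • x) ∈ U
    rw [star_smul]; exact U.smul_mem _ hx

lemma mem_starSub {U : Submodule ℂ (Fin d → ℂ)} {x : Fin d → ℂ} :
    x ∈ starSub U ↔ star x ∈ U := Iff.rfl

/-- matrices all of whose rows lie in `U`. -/
def rowSub (U : Submodule ℂ (Fin d → ℂ)) : Submodule ℂ (Matrix (Fin d) (Fin d) ℂ) where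
  carrier := {X | ∀ i, X i ∈ U}
  add_mem' := fun {X Y} hX hY i => U.add_mem (hX i) (hY i)
  zero_mem' := fun i => U.zero_mem
  smul_mem' := fun c {X} hX i => U.smul_mem c (hX i)

/-- matrices all of whose columns lie in `U`. -/
def colSub (U : Submodule ℂ (Fin d → ℂ)) : Submodule ℂ (Matrix (Fin d) (Fin d) ℂ) where
  carrier := {X | ∀ j, (fun i => X i j) ∈ U}
  add_mem' := fun {X Y} hX hY j => U.add_mem (hX j) (hY j)
  zero_mem' := fun j => U.zero_mem
  smul_mem' := fun c {X} hX j => U.smul_mem c (hX j)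

lemma mem_rowSub {U : Submodule ℂ (Fin d → ℂ)} {X : Matrix (Fin d) (Fin d) ℂ} :
    X ∈ rowSub U ↔ ∀ i, X i ∈ U := Iff.rfl

lemma mem_colSub {U : Submodule ℂ (Fin d → ℂ)} {X : Matrix (Fin d) (Fin d) ℂ} :
    X ∈ colSub U ↔ ∀ j, (fun i => X i j) ∈ U := Iff.rfl

def rowEquiv (U : Submodule ℂ (Fin d → ℂ)) : (rowSub U) ≃ₗ[ℂ] (Fin d → U) where
  toFun X := fun i => ⟨X.1 i, X.2 i⟩
  map_add' X Y := rfl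
  map_smul' c X := rfl
  invFun f := ⟨fun i => (f i).1, fun i => (f i).2⟩
  left_inv X := rfl
  right_inv f := rfl

def colEquiv (U : Submodule ℂ (Fin d → ℂ)) : (colSub U) ≃ₗ[ℂ] (Fin d → U) where
  toFun X := fun j => ⟨fun i => X.1 i j, X.2 j⟩
  map_add' X Y := rfl
  map_smul' c X := rfl
  invFun f := ⟨fun i j => (f j).1 i, fun j => (f j).2⟩
  left_inv X := rfl
  right_inv f := rfl

lemma finrank_rowSub (U : Submodule ℂ (Fin d → ℂ)) :
    Module.finrank ℂ (rowSub U) = d * Module.finrank ℂ U := by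
  rw [(rowEquiv U).finrank_eq, Module.finrank_pi_fintype, Finset.sum_const,
    Finset.card_univ, Fintype.card_fin, smul_eq_mul]

lemma finrank_colSub (U : Submodule ℂ (Fin d → ℂ)) :
    Module.finrank ℂ (colSub U) = d * Module.finrank ℂ U := by
  rw [(colEquiv U).finrank_eq, Module.finrank_pi_fintype, Finset.sum_const,
    Finset.card_univ, Fintype.card_fin, smul_eq_mul]

lemma nat_ineq {d s m : ℕ} (hs1 : 1 ≤ s) (hs2 : s + 1 ≤ d) (hm1 : 1 ≤ m)
    (hm2 : m + 1 ≤ d) : 2 * (d - 1) + 2 * (s * m) ≤ d * s + d * m := by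
  obtain ⟨a, rfl⟩ := Nat.exists_eq_add_of_le hs1
  obtain ⟨b, rfl⟩ := Nat.exists_eq_add_of_le hm1
  obtain ⟨t, rfl⟩ := Nat.exists_eq_add_of_le hs2
  have hb : b ≤ a + t := by omega
  have key : a * b ≤ a * a + a * t + t * b :=
    calc a * b ≤ a * (a + t) := Nat.mul_le_mul_left a hb
      _ = a * a + a * t := by ring
      _ ≤ a * a + a * t + t * b := Nat.le_add_right _ _
  have h1 : 2 * (1 + a + 1 + t - 1) = 2 + 2 * a + 2 * t := by omega
  nlinarith [key]

end

end Stmt4Aux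

/-- A trace-preserving entanglement-breaking (Holevo form) map with a semipositive fixed
point has kernel of dimension at least ; in particular its determinant vanishes. -/
theorem stmt_4 (d : ℕ) (hd : 2 ≤ d)
    (φ : Matrix (Fin d) (Fin d) ℂ →ₗ[ℂ] Matrix (Fin d) (Fin d) ℂ)
    (hφ : HolevoForm φ) (htp : ∀ X, (φ X).trace = X.trace)
    (A : Matrix (Fin d) (Fin d) ℂ) (hA : A.PosSemidef) (hA0 : A ≠ 0)
    (hAdet : A.det = 0) (hfix : φ A = A) :
    2 * (d - 1) ≤ Module.finrank ℂ ↥(LinearMap.ker φ) ∧ LinearMap.det φ = 0 := by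
  classical
  obtain ⟨k, ρ, E, hρ, hE, heq⟩ := hφ
  set S : Submodule ℂ (Fin d → ℂ) := Stmt4Aux.ortho A with hSdef
  set S₂ : Submodule ℂ (Fin d → ℂ) := Stmt4Aux.starSub S with hS2def
  have hc0 : ∀ i, (0:ℂ) ≤ (E i * A).trace := fun i => Stmt4Aux.trace_psd_mul_nonneg (hE i) hA
  have hAfix : ∑ i, (E i * A).trace • ρ i = A := by rw [← heq A, hfix]
  -- vectors in the kernel of A are in the kernel of each relevant ρ i
  have hKρ : ∀ i, (E i * A).trace ≠ 0 → ∀ v, A *ᵥ v = 0 → ρ i *ᵥ v = 0 := by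
    intro i hi v hv
    let q : Matrix (Fin d) (Fin d) ℂ →ₗ[ℂ] ℂ :=
      { toFun := fun M => star v ⬝ᵥ (M *ᵥ v)
        map_add' := fun M N => by
          show star v ⬝ᵥ ((M + N) *ᵥ v) = star v ⬝ᵥ (M *ᵥ v) + star v ⬝ᵥ (N *ᵥ v)
          rw [Matrix.add_mulVec, dotProduct_add]
        map_smul' := fun c M => by
          show star v ⬝ᵥ ((c • M) *ᵥ v) = c • (star v ⬝ᵥ (M *ᵥ v))
          rw [Matrix.smul_mulVec, dotProduct_smul] }
    have hterm : ∀ j ∈ Finset.univ, (0:ℂ) ≤ (E j * A).trace * (star v ⬝ᵥ (ρ j *ᵥ v)) :=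
      fun j _ => mul_nonneg (hc0 j) ((hρ j).dotProduct_mulVec_nonneg v)
    have hsum : ∑ j, (E j * A).trace * (star v ⬝ᵥ (ρ j *ᵥ v)) = 0 := by
      have h1 : q A = 0 := by
        show star v ⬝ᵥ (A *ᵥ v) = 0
        rw [hv, dotProduct_zero]
      rw [← hAfix, map_sum] at h1
      rw [← h1]
      refine Finset.sum_congr rfl fun j _ => ?_
      rw [_root_.map_smul, smul_eq_mul]
      rfl
    have h2 := (Finset.sum_eq_zero_iff_of_nonneg hterm).mp hsum i (Finset.mem_univ i)
    have hq : star v ⬝ᵥ (ρ i *ᵥ v) = 0 := by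
      rcases mul_eq_zero.mp h2 with h | h
      · exact absurd h hi
      · exact h
    exact ((hρ i).dotProduct_mulVec_zero_iff v).mp hq
  -- columns of Hermitian matrices whose kernel contains ker A lie in S
  have hmemS : ∀ (M : Matrix (Fin d) (Fin d) ℂ), Mᴴ = M →
      (∀ v, A *ᵥ v = 0 → M *ᵥ v = 0) → ∀ j, (fun l => M l j) ∈ S := by
    intro M hM hMk j
    intro v hv
    have h1 : M *ᵥ v = 0 := hMk v hv
    have h2 : star v ⬝ᵥ (fun l => M l j) = star ((M *ᵥ v) j) := by
      have h3 : (M *ᵥ v) j = ∑ l, M j l * v l := rfl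
      rw [h3, star_sum]
      refine Finset.sum_congr rfl fun l _ => ?_
      rw [star_mul']
      have h4 : star (M j l) = M l j :=
        (M.conjTranspose_apply j l).symm.trans (congrFun (congrFun hM l) j)
      rw [h4]
      exact mul_comm (star v l) (M l j)
    rw [h2, h1]
    simp
  -- columns of E i lie in ker A when tr(E i A) = 0
  have hEcolK : ∀ i, (E i * A).trace = 0 → ∀ j, A *ᵥ (fun l => E i l j) = 0 := by
    intro i hi j
    have hEA : E i * A = 0 := Stmt4Aux.psd_mul_eq_zero (hE i) hA hi
    have hAE : A * E i = 0 := by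
      have h := congrArg Matrix.conjTranspose hEA
      rwa [Matrix.conjTranspose_mul, (hE i).1, hA.1, Matrix.conjTranspose_zero] at h
    funext mm
    have h1 : (A * E i) mm j = 0 := by rw [hAE]; rfl
    show (A *ᵥ fun l => E i l j) mm = 0
    calc (A *ᵥ fun l => E i l j) mm = ∑ l, A mm l * E i l j := rfl
      _ = (A * E i) mm j := (Matrix.mul_apply).symm
      _ = 0 := h1
  have htrace_eq : ∀ (N X : Matrix (Fin d) (Fin d) ℂ),
      (N * X).trace = ∑ j, ∑ l, N j l * X l j := by
    intro N X
    simp [Matrix.trace, Matrix.diag, Matrix.mul_apply]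
  set C : Submodule ℂ (Matrix (Fin d) (Fin d) ℂ) := Stmt4Aux.colSub S with hCdef
  set R : Submodule ℂ (Matrix (Fin d) (Fin d) ℂ) := Stmt4Aux.rowSub S₂ with hRdef
  have hTrC : ∀ i, (E i * A).trace = 0 → ∀ X ∈ C, (E i * X).trace = 0 := by
    intro i hi X hX
    rw [htrace_eq]
    refine Finset.sum_eq_zero fun j _ => ?_
    have h0 := hX j (fun l => E i l j) (hEcolK i hi j)
    rw [← h0]
    refine Finset.sum_congr rfl fun l _ => ?_
    have h4 : star (E i l j) = E i j l :=
      ((E i).conjTranspose_apply l j).symm.trans (congrFun (congrFun (hE i).1 j) l)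
    show E i j l * X l j = star ((fun q => E i q j) l) * X l j
    rw [show star ((fun q => E i q j) l) = star (E i l j) from rfl, h4]
  have hTrR : ∀ i, (E i * A).trace = 0 → ∀ X ∈ R, (E i * X).trace = 0 := by
    intro i hi X hX
    rw [Matrix.trace_mul_comm, htrace_eq]
    refine Finset.sum_eq_zero fun l _ => ?_
    have hmem : star (X l) ∈ S := hX l
    have h0 := hmem (fun lq => E i lq l) (hEcolK i hi l)
    have h5 : star (fun lq => E i lq l) ⬝ᵥ star (X l) = star ((X l) ⬝ᵥ (fun lq => E i lq l)) :=
      Matrix.star_dotProduct_star _ _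
    have h1 : (X l) ⬝ᵥ (fun lq => E i lq l) = 0 := by
      have h2 : star ((X l) ⬝ᵥ (fun lq => E i lq l)) = 0 := by rw [← h5, h0]
      exact star_eq_zero.mp h2
    exact h1
  -- relevant ρ i are in C ⊓ R
  have hρmem : ∀ i, (E i * A).trace ≠ 0 → ρ i ∈ C ⊓ R := by
    intro i hi
    refine Submodule.mem_inf.mpr ⟨fun j => hmemS (ρ i) (hρ i).1 (hKρ i hi) j, fun l => ?_⟩
    show star (ρ i l) ∈ S
    have h1 : star (ρ i l) = fun lq => ρ i lq l := by
      funext lq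
      show star (ρ i l lq) = ρ i lq l
      rw [← Matrix.conjTranspose_apply, (hρ i).1]
    rw [h1]
    exact hmemS (ρ i) (hρ i).1 (hKρ i hi) l
  have himage : ∀ X ∈ C ⊔ R, φ X ∈ C ⊓ R := by
    intro X hX
    obtain ⟨Y, hY, Z, hZ, rfl⟩ := Submodule.mem_sup.mp hX
    rw [map_add]
    refine Submodule.add_mem _ ?_ ?_
    · rw [heq]
      refine Submodule.sum_mem _ fun i _ => ?_
      by_cases hi : (E i * A).trace = 0
      · rw [hTrC i hi Y hY, zero_smul]
        exact Submodule.zero_mem _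
      · exact Submodule.smul_mem _ _ (hρmem i hi)
    · rw [heq]
      refine Submodule.sum_mem _ fun i _ => ?_
      by_cases hi : (E i * A).trace = 0
      · rw [hTrR i hi Z hZ, zero_smul]
        exact Submodule.zero_mem _
      · exact Submodule.smul_mem _ _ (hρmem i hi)
  -- dimension bookkeeping
  set s : ℕ := Module.finrank ℂ S with hsdef
  set m : ℕ := Module.finrank ℂ S₂ with hmdef
  have hsd : Module.finrank ℂ C = d * s := Stmt4Aux.finrank_colSub S
  have hmd : Module.finrank ℂ R = d * m := Stmt4Aux.finrank_rowSub S₂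
  -- a nonzero column of A
  have hex : ∃ i j, A i j ≠ 0 := by
    by_contra h
    push_neg at h
    exact hA0 (Matrix.ext fun i j => h i j)
  obtain ⟨i0, j0, hij⟩ := hex
  have hcmem : (fun i => A i j0) ∈ S := hmemS A hA.1 (fun v hv => hv) j0
  have hcne : (fun i => A i j0) ≠ 0 := fun h => hij (congrFun h i0)
  have hs1 : 1 ≤ s := by
    have h1 : Submodule.span ℂ {(fun i => A i j0)} ≤ S := by
      rw [Submodule.span_le, Set.singleton_subset_iff]
      exact hcmem
    have h2 := Submodule.finrank_mono h1
    rwa [finrank_span_singleton hcne] at h2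
  have hm1 : 1 ≤ m := by
    have hmem2 : star (fun i => A i j0) ∈ S₂ := by
      show star (star (fun i => A i j0)) ∈ S
      rw [star_star]
      exact hcmem
    have hne2 : star (fun i => A i j0) ≠ 0 := fun h => hcne (by rw [← star_star (fun i => A i j0), h, star_zero])
    have h1 : Submodule.span ℂ {star (fun i => A i j0)} ≤ S₂ := by
      rw [Submodule.span_le, Set.singleton_subset_iff]
      exact hmem2
    have h2 := Submodule.finrank_mono h1
    rwa [finrank_span_singleton hne2] at h2
  -- a kernel vector of A
  obtain ⟨v0, hv0ne, hv0⟩ := Matrix.exists_mulVec_eq_zero_iff.mpr hAdet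
  have hfinrank_fun : Module.finrank ℂ (Fin d → ℂ) = d := by
    rw [Module.finrank_pi, Fintype.card_fin]
  have hs2 : s + 1 ≤ d := by
    have hdisj : Disjoint S (Submodule.span ℂ {v0}) := by
      rw [Submodule.disjoint_def]
      intro x hxS hxv
      obtain ⟨a, rfl⟩ := Submodule.mem_span_singleton.mp hxv
      have h0 := hxS v0 hv0
      rw [dotProduct_smul] at h0
      rcases smul_eq_zero.mp h0 with h | h
      · rw [h, zero_smul]
      · exact absurd (dotProduct_star_self_eq_zero.mp h) hv0ne
    have h1 := Submodule.finrank_add_finrank_le_of_disjoint hdisj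
    rwa [finrank_span_singleton hv0ne, hfinrank_fun] at h1
  have hm2 : m + 1 ≤ d := by
    have hsv0 : star v0 ≠ 0 := fun h => hv0ne (by rw [← star_star v0, h, star_zero])
    have hdisj : Disjoint S₂ (Submodule.span ℂ {star v0}) := by
      rw [Submodule.disjoint_def]
      intro x hxS hxv
      obtain ⟨a, rfl⟩ := Submodule.mem_span_singleton.mp hxv
      have hxS' : star (a • star v0) ∈ S := hxS
      rw [star_smul, star_star] at hxS'
      have h0 := hxS' v0 hv0
      rw [dotProduct_smul] at h0
      rcases smul_eq_zero.mp h0 with h | h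
      · rw [show a = 0 from by simpa using h, zero_smul]
      · exact absurd (dotProduct_star_self_eq_zero.mp h) hv0ne
    have h1 := Submodule.finrank_add_finrank_le_of_disjoint hdisj
    rwa [finrank_span_singleton hsv0, hfinrank_fun] at h1
  -- injection of C ⊓ R into Fin s → S₂
  have hinf_le : Module.finrank ℂ (C ⊓ R : Submodule ℂ (Matrix (Fin d) (Fin d) ℂ)) ≤ s * m := by
    let b : Module.Basis (Fin s) ℂ S := Module.finBasis ℂ S
    obtain ⟨S', hcompl⟩ := Submodule.exists_isCompl S
    let pr : (Fin d → ℂ) →ₗ[ℂ] S := S.linearProjOfIsCompl S' hcompl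
    let g : Fin s → ((Fin d → ℂ) →ₗ[ℂ] ℂ) := fun i => (b.coord i).comp pr
    have hg1 : ∀ (x : Fin d → ℂ) (hx : x ∈ S) (i : Fin s), g i x = b.repr ⟨x, hx⟩ i := by
      intro x hx i
      have hpr : pr x = ⟨x, hx⟩ := Submodule.linearProjOfIsCompl_apply_left hcompl ⟨x, hx⟩
      show b.coord i (pr x) = b.repr ⟨x, hx⟩ i
      rw [hpr, Module.Basis.coord_apply]
    have hmemval : ∀ (X : (C ⊓ R : Submodule ℂ (Matrix (Fin d) (Fin d) ℂ))) (i : Fin s),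
        (fun j => g i (fun l => X.1 l j)) ∈ S₂ := by
      intro X i
      have hXR : ∀ l, X.1 l ∈ S₂ := (Submodule.mem_inf.mp X.2).2
      have hexp : (fun j => g i (fun l => X.1 l j))
          = ∑ l, g i (fun lq => if l = lq then 1 else 0) • X.1 l := by
        funext j
        rw [LinearMap.pi_apply_eq_sum_univ (g i) (fun l => X.1 l j), Finset.sum_apply]
        refine Finset.sum_congr rfl fun l _ => ?_
        rw [Pi.smul_apply, smul_eq_mul, smul_eq_mul, mul_comm]
      rw [hexp]
      exact Submodule.sum_mem _ fun l _ => Submodule.smul_mem _ _ (hXR l)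
    let T : (C ⊓ R : Submodule ℂ (Matrix (Fin d) (Fin d) ℂ)) →ₗ[ℂ] (Fin s → S₂) :=
      { toFun := fun X => fun i => ⟨fun j => g i (fun l => X.1 l j), hmemval X i⟩
        map_add' := fun X Y => by
          funext i
          apply Subtype.ext
          funext j
          show g i (fun l => (X.1 + Y.1) l j) = g i (fun l => X.1 l j) + g i (fun l => Y.1 l j)
          rw [show (fun l => (X.1 + Y.1) l j) = (fun l => X.1 l j) + (fun l => Y.1 l j) from rfl,
            map_add]
        map_smul' := fun c X => by
          funext i
          apply Subtype.ext
          funext j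
          show g i (fun l => (c • X.1) l j) = c * g i (fun l => X.1 l j)
          rw [show (fun l => (c • X.1) l j) = c • (fun l => X.1 l j) from rfl, _root_.map_smul,
            smul_eq_mul] }
    have hTinj : Function.Injective T := by
      rw [← LinearMap.ker_eq_bot]
      refine (Submodule.eq_bot_iff _).mpr fun X hX => ?_
      have h0 : T X = 0 := hX
      have hg0 : ∀ i j, g i (fun l => X.1 l j) = 0 := by
        intro i j
        have h1 : (T X i).1 j = ((0 : Fin s → S₂) i).1 j := by rw [h0]
        exact h1
      have hcol0 : ∀ j, (fun l => X.1 l j) = 0 := by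
        intro j
        have hmem : (fun l => X.1 l j) ∈ S := (Submodule.mem_inf.mp X.2).1 j
        have hz : (⟨(fun l => X.1 l j), hmem⟩ : S) = 0 := by
          refine b.forall_coord_eq_zero_iff.mp fun i => ?_
          rw [Module.Basis.coord_apply, ← hg1 _ hmem i]
          exact hg0 i j
        exact congrArg Subtype.val hz
      apply Subtype.ext
      funext l j
      exact congrFun (hcol0 j) l
    have h1 := LinearMap.finrank_le_finrank_of_injective hTinj
    rwa [Module.finrank_pi_fintype, Finset.sum_const, Finset.card_univ, Fintype.card_fin,
      smul_eq_mul] at h1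
  -- rank-nullity assembly
  let ψ : (C ⊔ R : Submodule ℂ (Matrix (Fin d) (Fin d) ℂ)) →ₗ[ℂ] Matrix (Fin d) (Fin d) ℂ :=
    φ.domRestrict (C ⊔ R)
  have hψrange : LinearMap.range ψ ≤ C ⊓ R := by
    rintro x ⟨X, rfl⟩
    exact himage X.1 X.2
  have hrank : Module.finrank ℂ (LinearMap.range ψ) ≤ s * m :=
    le_trans (Submodule.finrank_mono hψrange) hinf_le
  have hrn : Module.finrank ℂ (LinearMap.range ψ) + Module.finrank ℂ (LinearMap.ker ψ)
      = Module.finrank ℂ (C ⊔ R : Submodule ℂ (Matrix (Fin d) (Fin d) ℂ)) :=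
    LinearMap.finrank_range_add_finrank_ker ψ
  have hsupinf := Submodule.finrank_sup_add_finrank_inf_eq C R
  have hkerker : Module.finrank ℂ (LinearMap.ker ψ) ≤ Module.finrank ℂ (LinearMap.ker φ) := by
    let ι : LinearMap.ker ψ →ₗ[ℂ] LinearMap.ker φ :=
      { toFun := fun x => ⟨x.1.1, by
          have h := x.2
          rwa [LinearMap.mem_ker, LinearMap.domRestrict_apply] at h⟩
        map_add' := fun x y => rfl
        map_smul' := fun c x => rfl }
    have hι : Function.Injective ι := by
      intro x y hxy
      have h' : (ι x).1 = (ι y).1 := by rw [hxy]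
      exact Subtype.ext (Subtype.ext h')
    exact LinearMap.finrank_le_finrank_of_injective hι
  have hkey : 2 * (d - 1) ≤ Module.finrank ℂ (LinearMap.ker φ) := by
    have hineq := Stmt4Aux.nat_ineq hs1 hs2 hm1 hm2
    have hinf2 : Module.finrank ℂ (C ⊓ R : Submodule ℂ (Matrix (Fin d) (Fin d) ℂ)) ≤ s * m :=
      hinf_le
    rw [hsd, hmd] at hsupinf
    linarith [hineq, hrank, hrn, hsupinf, hinf2, hkerker]
  refine ⟨hkey, ?_⟩
  by_contra hdet
  have hunit : IsUnit (LinearMap.toMatrix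
      (Module.finBasis ℂ (Matrix (Fin d) (Fin d) ℂ)) (Module.finBasis ℂ (Matrix (Fin d) (Fin d) ℂ))
      φ).det := by
    rw [LinearMap.det_toMatrix]
    exact isUnit_iff_ne_zero.2 hdet
  have h1 : (LinearEquiv.ofIsUnitDet hunit : Matrix (Fin d) (Fin d) ℂ →ₗ[ℂ] Matrix (Fin d) (Fin d) ℂ)
      = φ := LinearEquiv.coe_ofIsUnitDet hunit
  have hker0 : LinearMap.ker φ = ⊥ := by
    rw [← h1]
    exact LinearEquiv.ker _
  rw [hker0, finrank_bot] at hkey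
  omega
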